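/- For each k ∈ {5, 6, 7, 8} there exists a universal constant C > 0 (independent of m and R) such that for every m and every m×m correlation matrix R: Σ over all tuples (p₁, q₁, p₂, q₂, p₃, q₃, p₄, q₄) ∈ {1,…,m}⁸ with |{p₁, q₁, …, p₄, q₄}| = k (cardinality as a set) of ∏_{d=1}^{4} |ρ_{p_d q_d}| ≤ C · m⁴ · ‖R − I_m‖_F^{k−4}. -/

import Mathlib

open Finset

noncomputable section

/-- `R` is an `m × m` (Pearson) correlation matrix: symmetric positive semidefinite
with unit diagonal. -/
def IsCorrMatrix {m : ℕ} (R : Matrix (Fin m) (Fin m) ℝ) : Prop :=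
  R.PosSemidef ∧ ∀ p, R p p = 1

/-- The Frobenius norm `‖R - I_m‖_F`. -/
def frobDistId {m : ℕ} (R : Matrix (Fin m) (Fin m) ℝ) : ℝ :=
  Real.sqrt (∑ p, ∑ q, (R p q - if p = q then (1 : ℝ) else 0) ^ 2)

namespace CorrProofAux

variable {m : ℕ}


variable {m : ℕ}

/-- entrywise |R - I| -/
def ent (R : Matrix (Fin m) (Fin m) ℝ) (p q : Fin m) : ℝ :=
  |R p q - if p = q then 1 else 0|

lemma ent_nonneg (R : Matrix (Fin m) (Fin m) ℝ) (p q : Fin m) : 0 ≤ ent R p q :=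
  abs_nonneg _

lemma frob_nonneg (R : Matrix (Fin m) (Fin m) ℝ) : 0 ≤ frobDistId R :=
  Real.sqrt_nonneg _

lemma sum_ent_sq (R : Matrix (Fin m) (Fin m) ℝ) :
    ∑ z : Fin m × Fin m, (ent R z.1 z.2) ^ 2 = frobDistId R ^ 2 := by
  rw [frobDistId, Real.sq_sqrt]
  · rw [Fintype.sum_prod_type]
    exact Fintype.sum_congr _ _ fun p => Fintype.sum_congr _ _ fun q => by rw [ent, sq_abs]
  · exact Finset.sum_nonneg fun p _ => Finset.sum_nonneg fun q _ => sq_nonneg _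

lemma sum_ent_le (R : Matrix (Fin m) (Fin m) ℝ) :
    ∑ z : Fin m × Fin m, ent R z.1 z.2 ≤ (m : ℝ) * frobDistId R := by
  have h := Finset.sum_mul_sq_le_sq_mul_sq (univ : Finset (Fin m × Fin m))
    (fun _ => (1 : ℝ)) (fun z => ent R z.1 z.2)
  simp only [one_mul, one_pow, Finset.sum_const, Finset.card_univ, nsmul_eq_mul, mul_one] at h
  rw [sum_ent_sq] at h
  have h0 : 0 ≤ ∑ z : Fin m × Fin m, ent R z.1 z.2 :=
    Finset.sum_nonneg fun z _ => ent_nonneg R z.1 z.2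
  have hm : 0 ≤ (m : ℝ) * frobDistId R :=
    mul_nonneg (Nat.cast_nonneg m) (frob_nonneg R)
  have hcard : ((Fintype.card (Fin m × Fin m) : ℝ)) = (m:ℝ) * m := by
    push_cast [Fintype.card_prod, Fintype.card_fin]
    ring
  rw [hcard] at h
  nlinarith [frob_nonneg R]

lemma abs_entry_le_one {R : Matrix (Fin m) (Fin m) ℝ} (hR : IsCorrMatrix R) (p q : Fin m) :
    |R p q| ≤ 1 := by
  rcases eq_or_ne p q with rfl | hpq
  · rw [hR.2 p]; simp
  have hsymm : R q p = R p q := by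
    have h2 := congrFun (congrFun hR.1.1 q) p
    simpa [Matrix.conjTranspose_apply] using h2.symm
  have key : ∀ c : ℝ, 0 ≤ 1 + c * (2 * R p q) + c ^ 2 := by
    intro c
    have h := hR.1.dotProduct_mulVec_nonneg (fun i => (if i = p then 1 else 0) + (if i = q then c else 0))
    have hv : ∀ i : Fin m, (Matrix.mulVec R
        (fun i => (if i = p then (1:ℝ) else 0) + (if i = q then c else 0))) i
        = R i p + c * R i q := by
      intro i
      simp only [Matrix.mulVec, dotProduct, mul_add]
      rw [Finset.sum_add_distrib]
      congr 1
      · rw [Finset.sum_eq_single p]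
        · simp
        · intro b _ hb; simp [hb]
        · simp
      · rw [Finset.sum_eq_single q]
        · simp [mul_comm]
        · intro b _ hb; simp [hb]
        · simp
    rw [dotProduct] at h
    simp only [star_trivial] at h
    rw [Finset.sum_congr rfl (fun i _ => by rw [hv i])] at h
    have hexp : ∀ i : Fin m, ((if i = p then (1:ℝ) else 0) + if i = q then c else 0) * (R i p + c * R i q)
        = (if i = p then R i p + c * R i q else 0) + (if i = q then c * (R i p + c * R i q) else 0) := by
      intro i; split_ifs <;> ring
    rw [Finset.sum_congr rfl (fun i _ => hexp i), Finset.sum_add_distrib,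
      Finset.sum_ite_eq' Finset.univ p, Finset.sum_ite_eq' Finset.univ q] at h
    simp only [Finset.mem_univ, if_true, hR.2 p, hR.2 q, hsymm] at h
    nlinarith
  have h1 := key 1
  have h2 := key (-1)
  rw [abs_le]
  constructor <;> nlinarith


abbrev Tup (m : ℕ) := (Fin 4 → Fin m) × (Fin 4 → Fin m)

def Pset (x : Tup m) : Finset (Fin m) := image x.1 univ ∪ image x.2 univ

def pairF (x : Tup m) (d : Fin 4) : Finset (Fin m) := {x.1 d, x.2 d}

def Dvals (x : Tup m) (D : Finset (Fin 4)) : Finset (Fin m) := D.biUnion (pairF x)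

def Good (x : Tup m) (D : Finset (Fin 4)) : Prop :=
  (∀ d ∈ D, x.1 d ≠ x.2 d) ∧
    ∀ d ∈ D, ∀ d' ∈ D, d ≠ d' → Disjoint (pairF x d) (pairF x d')

lemma fst_mem_Pset (x : Tup m) (d : Fin 4) : x.1 d ∈ Pset x :=
  mem_union_left _ (mem_image_of_mem _ (mem_univ d))

lemma snd_mem_Pset (x : Tup m) (d : Fin 4) : x.2 d ∈ Pset x :=
  mem_union_right _ (mem_image_of_mem _ (mem_univ d))

lemma pairF_subset_Pset (x : Tup m) (d : Fin 4) : pairF x d ⊆ Pset x := by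
  intro v hv
  rcases mem_insert.1 hv with rfl | hv
  · exact fst_mem_Pset x d
  · rcases mem_singleton.1 hv with rfl
    exact snd_mem_Pset x d

lemma Pset_subset_biUnion (x : Tup m) : Pset x ⊆ univ.biUnion (pairF x) := by
  intro v hv
  rcases mem_union.1 hv with hv | hv <;> rcases mem_image.1 hv with ⟨d, _, rfl⟩ <;>
    refine mem_biUnion.2 ⟨d, mem_univ d, ?_⟩
  · exact mem_insert_self _ _
  · exact mem_insert_of_mem (mem_singleton_self _)

lemma Dvals_subset_Pset (x : Tup m) (D : Finset (Fin 4)) : Dvals x D ⊆ Pset x := by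
  intro v hv
  rcases mem_biUnion.1 hv with ⟨d, _, hd⟩
  exact pairF_subset_Pset x d hd

lemma good_mono {x : Tup m} {D M : Finset (Fin 4)} (h : Good x M) (hDM : D ⊆ M) : Good x D :=
  ⟨fun d hd => h.1 d (hDM hd), fun d hd d' hd' => h.2 d (hDM hd) d' (hDM hd')⟩

lemma card_Dvals {x : Tup m} {D : Finset (Fin 4)} (h : Good x D) :
    (Dvals x D).card = 2 * D.card := by
  rw [Dvals, card_biUnion (fun d hd d' hd' hne => h.2 d hd d' hd' hne)]
  have hc : ∀ d ∈ D, (pairF x d).card = 2 := fun d hd => by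
    rw [pairF]; exact card_pair (h.1 d hd)
  rw [Finset.sum_congr rfl hc, Finset.sum_const, smul_eq_mul, mul_comm]

lemma exists_good (x : Tup m) (k : ℕ) (hcard : (Pset x).card = k) :
    ∃ D : Finset (Fin 4), Good x D ∧ D.card = k - 4 := by
  classical
  set 𝒢 : Finset (Finset (Fin 4)) := univ.filter (fun D => Good x D) with h𝒢
  have hne : 𝒢.Nonempty := ⟨∅, mem_filter.2 ⟨mem_univ _, by simp [Good]⟩⟩
  obtain ⟨M, hM𝒢, hMmax⟩ : ∃ M ∈ 𝒢, ∀ x ∈ 𝒢, ¬ M < x := by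
    obtain ⟨M, hM⟩ := Finset.exists_maximal hne
    exact ⟨M, hM.1, fun y hy hlt => hM.not_gt hy hlt⟩
  have hMgood : Good x M := (mem_filter.1 hM𝒢).2
  -- every pair outside M contributes at most one new value
  have hnew : ∀ d ∈ univ \ M, (pairF x d \ Dvals x M).card ≤ 1 := by
    intro d hd
    by_contra hlt
    push_neg at hlt
    have h2 : 2 ≤ (pairF x d \ Dvals x M).card := hlt
    have hsub : pairF x d \ Dvals x M ⊆ pairF x d := sdiff_subset
    have hple : (pairF x d).card ≤ 2 := by
      rw [pairF]; exact (card_insert_le _ _).trans (by simp)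
    have heq : pairF x d \ Dvals x M = pairF x d := by
      exact Finset.eq_of_subset_of_card_le hsub (hple.trans h2)
    have hdisj : Disjoint (pairF x d) (Dvals x M) := by
      rw [← heq]; exact sdiff_disjoint
    have hne12 : x.1 d ≠ x.2 d := by
      intro hEq
      have h3 : (pairF x d).card ≤ 1 := by rw [pairF, hEq]; simp
      have h4 := card_le_card hsub
      omega
    have hdM : d ∉ M := (mem_sdiff.1 hd).2
    have hsubD : ∀ e ∈ M, pairF x e ⊆ Dvals x M := fun e he v hv =>
      mem_biUnion.2 ⟨e, he, hv⟩
    have hgood' : Good x (insert d M) := by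
      constructor
      · intro e he
        rcases mem_insert.1 he with h1 | h1
        · rw [h1]; exact hne12
        · exact hMgood.1 e h1
      · intro e he e' he' hee
        rcases mem_insert.1 he with h1 | h1 <;> rcases mem_insert.1 he' with h2 | h2
        · exact absurd (h1.trans h2.symm) hee
        · rw [h1]; exact hdisj.mono_right (Finset.le_iff_subset.2 (hsubD e' h2))
        · rw [h2]; exact (hdisj.mono_right (Finset.le_iff_subset.2 (hsubD e h1))).symm
        · exact hMgood.2 e h1 e' h2 hee
    exact hMmax (insert d M) (mem_filter.2 ⟨mem_univ _, hgood'⟩) (ssubset_insert hdM)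
  -- counting
  have hsubset : Pset x ⊆ Dvals x M ∪ (univ \ M).biUnion (fun d => pairF x d \ Dvals x M) := by
    intro v hv
    rcases mem_biUnion.1 (Pset_subset_biUnion x hv) with ⟨d, _, hvd⟩
    by_cases hvD : v ∈ Dvals x M
    · exact mem_union_left _ hvD
    by_cases hdM : d ∈ M
    · exact absurd (mem_biUnion.2 ⟨d, hdM, hvd⟩) hvD
    · exact mem_union_right _ (mem_biUnion.2 ⟨d, mem_sdiff.2 ⟨mem_univ _, hdM⟩,
        mem_sdiff.2 ⟨hvd, hvD⟩⟩)
  have hcount : k ≤ 2 * M.card + (4 - M.card) := by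
    have h1 : (Pset x).card ≤ (Dvals x M).card
        + ∑ d ∈ univ \ M, (pairF x d \ Dvals x M).card := by
      calc (Pset x).card ≤ (Dvals x M ∪ (univ \ M).biUnion
            (fun d => pairF x d \ Dvals x M)).card := card_le_card hsubset
        _ ≤ _ := by
            refine (card_union_le _ _).trans ?_
            exact Nat.add_le_add_left (card_biUnion_le) _
    have h2 : ∑ d ∈ univ \ M, (pairF x d \ Dvals x M).card ≤ 4 - M.card := by
      calc ∑ d ∈ univ \ M, (pairF x d \ Dvals x M).card ≤ ∑ _d ∈ univ \ M, 1 :=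
            Finset.sum_le_sum hnew
        _ = (univ \ M).card := by simp
        _ = 4 - M.card := by
            rw [card_sdiff_of_subset (subset_univ M)]
            simp
    rw [hcard] at h1
    rw [card_Dvals hMgood] at h1
    omega
  have hM4 : M.card ≤ 4 := by
    calc M.card ≤ (univ : Finset (Fin 4)).card := card_le_card (subset_univ M)
      _ = 4 := by simp
  obtain ⟨D, hDM, hDcard⟩ := Finset.exists_subset_card_eq (s := M) (n := k - 4) (by omega)
  exact ⟨D, good_mono hMgood hDM, hDcard⟩


def slot (x : Tup m) (d : Fin 4) (b : Bool) : Fin m := if b then x.1 d else x.2 d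

lemma slot_mem_Pset (x : Tup m) (d : Fin 4) (b : Bool) : slot x d b ∈ Pset x := by
  cases b
  · exact snd_mem_Pset x d
  · exact fst_mem_Pset x d

lemma mem_iff_exists_orderIso {s : Finset (Fin m)} {n : ℕ} (h : s.card = n) (a : Fin m) :
    a ∈ s ↔ ∃ i : Fin n, ((s.orderIsoOfFin h i : Fin m)) = a := by
  constructor
  · intro ha
    refine ⟨(s.orderIsoOfFin h).symm ⟨a, ha⟩, ?_⟩
    rw [OrderIso.apply_symm_apply]
  · rintro ⟨i, rfl⟩
    exact (s.orderIsoOfFin h i).2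

lemma ordiso_symm_inj {s t : Finset (Fin m)} {n : ℕ} (hs : s.card = n) (ht : t.card = n)
    (hst : s = t) {a b : Fin m} (ha : a ∈ s) (hb : b ∈ t)
    (h : (s.orderIsoOfFin hs).symm ⟨a, ha⟩ = (t.orderIsoOfFin ht).symm ⟨b, hb⟩) : a = b := by
  subst hst
  have h2 := (s.orderIsoOfFin hs).symm.injective h
  exact Subtype.ext_iff.1 h2

section StepB

variable (R : Matrix (Fin m) (Fin m) ℝ) (k : ℕ)

/-- The injection used in the counting argument. -/
def Phi (h5 : 5 ≤ k) (z0 : Fin m) (D : Finset (Fin 4)) (x : Tup m) :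
    (Fin 4 → Fin m × Fin m) × (Fin 4 → Bool → Fin k) × (Fin (8 - k) → Fin m) :=
  ⟨fun d => if d ∈ D then (x.1 d, x.2 d) else (z0, z0),
   fun d b =>
     if h : (Pset x).card = k then ((Pset x).orderIsoOfFin h).symm ⟨slot x d b, slot_mem_Pset x d b⟩
     else ⟨0, by omega⟩,
   fun i =>
     if h : (Pset x \ Dvals x D).card = 8 - k then ((Pset x \ Dvals x D).orderIsoOfFin h i : Fin m)
     else z0⟩

lemma stepB (h5 : 5 ≤ k) (h8 : k ≤ 8) (hm : 0 < m) (D : Finset (Fin 4)) (hD : D.card = k - 4)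
    (S : Finset (Tup m)) (hSmem : ∀ x ∈ S, Good x D ∧ (Pset x).card = k) :
    ∑ x ∈ S, ∏ d ∈ D, ent R (x.1 d) (x.2 d)
      ≤ (k : ℝ) ^ 8 * (m : ℝ) ^ (8 - k) * (∑ z : Fin m × Fin m, ent R z.1 z.2) ^ (k - 4) := by
  classical
  set z0 : Fin m := ⟨0, hm⟩ with hz0
  set w : Fin 4 → Fin m × Fin m → ℝ := fun d z =>
    if d ∈ D then ent R z.1 z.2 else if z = (z0, z0) then 1 else 0 with hw
  set W : (Fin 4 → Fin m × Fin m) → ℝ := fun u => ∏ d, w d (u d) with hW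
  have hwnn : ∀ d z, 0 ≤ w d z := by
    intro d z
    rw [hw]
    dsimp only
    split_ifs
    · exact ent_nonneg R _ _
    · exact zero_le_one
    · exact le_refl 0
  have hWnn : ∀ u, 0 ≤ W u := fun u => Finset.prod_nonneg fun d _ => hwnn d (u d)
  -- each term equals the weight of its image
  have hterm : ∀ x ∈ S, ∏ d ∈ D, ent R (x.1 d) (x.2 d) = W ((Phi k h5 z0 D x).1) := by
    intro x _
    rw [hW]
    dsimp only
    rw [show (∏ d, w d ((Phi k h5 z0 D x).1 d)) =
        ∏ d, (if d ∈ D then ent R (x.1 d) (x.2 d) else 1) from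
      Fintype.prod_congr _ _ fun d => by
        by_cases hd : d ∈ D <;> simp [Phi, hw, hd]]
    rw [Finset.prod_ite_mem univ D fun d => ent R (x.1 d) (x.2 d), univ_inter]
  -- injectivity of Phi on S
  have hinj : ∀ x ∈ S, ∀ y ∈ S, Phi k h5 z0 D x = Phi k h5 z0 D y → x = y := by
    intro x hx y hy hΦ
    obtain ⟨hxg, hxc⟩ := hSmem x hx
    obtain ⟨hyg, hyc⟩ := hSmem y hy
    have hu : ∀ d ∈ D, x.1 d = y.1 d ∧ x.2 d = y.2 d := by
      intro d hd
      have h1 := congrFun (congrArg Prod.fst hΦ) d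
      simp only [Phi, hd, if_pos] at h1
      exact ⟨congrArg Prod.fst h1, congrArg Prod.snd h1⟩
    have hDv : Dvals x D = Dvals y D := by
      apply Finset.biUnion_congr rfl
      intro d hd
      rw [pairF, pairF, (hu d hd).1, (hu d hd).2]
    have hNx : (Pset x \ Dvals x D).card = 8 - k := by
      rw [card_sdiff_of_subset (Dvals_subset_Pset x D), hxc, card_Dvals hxg, hD]
      omega
    have hNy : (Pset y \ Dvals y D).card = 8 - k := by
      rw [card_sdiff_of_subset (Dvals_subset_Pset y D), hyc, card_Dvals hyg, hD]
      omega
    have hg := congrArg (fun t => t.2.2) hΦ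
    simp only [Phi] at hg
    have hNeq : Pset x \ Dvals x D = Pset y \ Dvals y D := by
      ext a
      rw [mem_iff_exists_orderIso hNx a, mem_iff_exists_orderIso hNy a]
      constructor <;> rintro ⟨i, rfl⟩ <;> refine ⟨i, ?_⟩
      · have := congrFun hg i
        rw [dif_pos hNx, dif_pos hNy] at this
        exact this.symm
      · have := congrFun hg i
        rw [dif_pos hNx, dif_pos hNy] at this
        exact this
    have hPeq : Pset x = Pset y := by
      have h1 : Dvals x D ∪ (Pset x \ Dvals x D) = Pset x :=
        Finset.union_sdiff_of_subset (Dvals_subset_Pset x D)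
      have h2 : Dvals y D ∪ (Pset y \ Dvals y D) = Pset y :=
        Finset.union_sdiff_of_subset (Dvals_subset_Pset y D)
      rw [← h1, ← h2, hNeq, hDv]
    have hslot : ∀ d b, slot x d b = slot y d b := by
      intro d b
      have hf := congrFun (congrFun (congrArg (fun t => t.2.1) hΦ) d) b
      simp only [Phi] at hf
      rw [dif_pos hxc, dif_pos hyc] at hf
      exact ordiso_symm_inj hxc hyc hPeq _ _ hf
    have h1 : x.1 = y.1 := funext fun d => hslot d true
    have h2 : x.2 = y.2 := funext fun d => hslot d false
    exact Prod.ext h1 h2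
  -- main chain
  calc ∑ x ∈ S, ∏ d ∈ D, ent R (x.1 d) (x.2 d)
      = ∑ x ∈ S, W ((Phi k h5 z0 D x).1) := Finset.sum_congr rfl hterm
    _ = ∑ y ∈ S.image (Phi k h5 z0 D), W y.1 := by rw [Finset.sum_image hinj]
    _ ≤ ∑ y : (Fin 4 → Fin m × Fin m) × (Fin 4 → Bool → Fin k) × (Fin (8 - k) → Fin m), W y.1 :=
        Finset.sum_le_sum_of_subset_of_nonneg (subset_univ _) fun y _ _ => hWnn y.1
    _ = (Fintype.card ((Fin 4 → Bool → Fin k) × (Fin (8 - k) → Fin m)) : ℝ) * ∑ u, W u := by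
        rw [Fintype.sum_prod_type]
        simp only [Finset.sum_const, card_univ, nsmul_eq_mul]
        rw [← Finset.mul_sum]
        try simp [Fintype.card_prod]
    _ = (k : ℝ) ^ 8 * (m : ℝ) ^ (8 - k) * (∑ z : Fin m × Fin m, ent R z.1 z.2) ^ (k - 4) := by
        have hsumW : ∑ u, W u = (∑ z : Fin m × Fin m, ent R z.1 z.2) ^ (k - 4) := by
          rw [hW]
          dsimp only
          rw [← Fintype.piFinset_univ, ← Finset.prod_univ_sum]
          have hcol : ∀ d : Fin 4, (∑ z ∈ (univ : Finset (Fin m × Fin m)), w d z)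
              = if d ∈ D then (∑ z : Fin m × Fin m, ent R z.1 z.2) else 1 := by
            intro d
            by_cases hd : d ∈ D
            · simp [hw, hd]
            · simp only [hw, hd, if_false]
              rw [Finset.sum_ite_eq' univ ((z0, z0) : Fin m × Fin m) (fun _ => (1 : ℝ))]
              simp
          rw [Fintype.prod_congr _ _ hcol, Finset.prod_ite_mem univ D _, univ_inter,
            Finset.prod_const, hD]
        rw [hsumW]
        congr 1
        have hcard : Fintype.card ((Fin 4 → Bool → Fin k) × (Fin (8 - k) → Fin m))
            = k ^ 8 * m ^ (8 - k) := by
          simp [Fintype.card_prod, Fintype.card_fun]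
          try ring_nf
          try tauto
        rw [hcard]
        push_cast
        ring


end StepB

lemma term_le {R : Matrix (Fin m) (Fin m) ℝ} (hR : IsCorrMatrix R) (x : Tup m)
    (D : Finset (Fin 4)) (hD : ∀ d ∈ D, x.1 d ≠ x.2 d) :
    ∏ d, |R (x.1 d) (x.2 d)| ≤ ∏ d ∈ D, ent R (x.1 d) (x.2 d) := by
  have h1 : ∀ d ∈ D, |R (x.1 d) (x.2 d)| = ent R (x.1 d) (x.2 d) := by
    intro d hd
    rw [ent, if_neg (hD d hd), sub_zero]
  calc ∏ d, |R (x.1 d) (x.2 d)|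
      = (∏ d ∈ univ \ D, |R (x.1 d) (x.2 d)|) * ∏ d ∈ D, |R (x.1 d) (x.2 d)| :=
        (Finset.prod_sdiff (subset_univ D)).symm
    _ ≤ 1 * ∏ d ∈ D, |R (x.1 d) (x.2 d)| := by
        refine mul_le_mul_of_nonneg_right ?_ (Finset.prod_nonneg fun d _ => abs_nonneg _)
        exact Finset.prod_le_one (fun d _ => abs_nonneg _)
          (fun d _ => abs_entry_le_one hR _ _)
    _ = ∏ d ∈ D, ent R (x.1 d) (x.2 d) := by
        rw [one_mul]
        exact Finset.prod_congr rfl h1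

end CorrProofAux

open CorrProofAux in
theorem sum_prod_corr_abs_card_le (k : ℕ) (hk : k ∈ ({5, 6, 7, 8} : Finset ℕ)) :
    ∃ C : ℝ, 0 < C ∧ ∀ (m : ℕ) (R : Matrix (Fin m) (Fin m) ℝ), IsCorrMatrix R →
      ∑ x ∈ (Finset.univ : Finset ((Fin 4 → Fin m) × (Fin 4 → Fin m))).filter
          (fun x => (Finset.image x.1 Finset.univ ∪ Finset.image x.2 Finset.univ).card = k),
        ∏ d, |R (x.1 d) (x.2 d)|
        ≤ C * (m : ℝ) ^ 4 * frobDistId R ^ (k - 4) := by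
  have h5 : 5 ≤ k := by fin_cases hk <;> norm_num
  have h8 : k ≤ 8 := by fin_cases hk <;> norm_num
  refine ⟨16 * 8 ^ 8, by norm_num, ?_⟩
  intro m R hR
  classical
  by_cases hm : m = 0
  · subst hm
    haveI hie : IsEmpty (Tup 0) := ⟨fun x => isEmptyElim (x.1 0)⟩
    rw [Finset.eq_empty_of_isEmpty ((Finset.univ : Finset (Tup 0)).filter _), Finset.sum_empty]
    norm_num
  · have hm0 : 0 < m := Nat.pos_of_ne_zero hm
    have h𝒟 : ∀ D ∈ (univ : Finset (Finset (Fin 4))).filter (fun D => D.card = k - 4),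
        ∑ x ∈ univ.filter (fun x : Tup m => Good x D ∧ (Pset x).card = k),
          ∏ d ∈ D, ent R (x.1 d) (x.2 d)
        ≤ (k : ℝ) ^ 8 * (m : ℝ) ^ (8 - k) * (∑ z : Fin m × Fin m, ent R z.1 z.2) ^ (k - 4) := by
      intro D hD
      exact stepB R k h5 h8 hm0 D (mem_filter.1 hD).2 _ (fun x hx => (mem_filter.1 hx).2)
    have hSnn : (0 : ℝ) ≤ ∑ z : Fin m × Fin m, ent R z.1 z.2 :=
      Finset.sum_nonneg fun z _ => ent_nonneg R z.1 z.2
    have stepA : ∑ x ∈ (Finset.univ : Finset (Tup m)).filter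
          (fun x => (Finset.image x.1 Finset.univ ∪ Finset.image x.2 Finset.univ).card = k),
        ∏ d, |R (x.1 d) (x.2 d)|
        ≤ ∑ D ∈ (univ : Finset (Finset (Fin 4))).filter (fun D => D.card = k - 4),
            ∑ x ∈ univ.filter (fun x : Tup m => Good x D ∧ (Pset x).card = k),
              ∏ d ∈ D, ent R (x.1 d) (x.2 d) := by
      have hx : ∀ x ∈ (Finset.univ : Finset (Tup m)).filter
            (fun x => (Finset.image x.1 Finset.univ ∪ Finset.image x.2 Finset.univ).card = k),
          ∏ d, |R (x.1 d) (x.2 d)| ≤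
            ∑ D ∈ (univ : Finset (Finset (Fin 4))).filter (fun D => D.card = k - 4),
              (if Good x D ∧ (Pset x).card = k then ∏ d ∈ D, ent R (x.1 d) (x.2 d) else 0) := by
        intro x hxK
        have hcard : (Pset x).card = k := (mem_filter.1 hxK).2
        obtain ⟨D₀, hGood, hDcard⟩ := exists_good x k hcard
        have hmem𝒟 : D₀ ∈ (univ : Finset (Finset (Fin 4))).filter (fun D => D.card = k - 4) :=
          mem_filter.2 ⟨mem_univ _, hDcard⟩
        have hterm : ∏ d, |R (x.1 d) (x.2 d)| ≤
            (if Good x D₀ ∧ (Pset x).card = k then ∏ d ∈ D₀, ent R (x.1 d) (x.2 d) else 0) := by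
          rw [if_pos ⟨hGood, hcard⟩]
          exact term_le hR x D₀ hGood.1
        refine hterm.trans (Finset.single_le_sum (f := fun D =>
          if Good x D ∧ (Pset x).card = k then ∏ d ∈ D, ent R (x.1 d) (x.2 d) else 0)
          ?_ hmem𝒟)
        intro D _
        split_ifs
        · exact Finset.prod_nonneg fun d _ => ent_nonneg R _ _
        · exact le_refl 0
      calc ∑ x ∈ (Finset.univ : Finset (Tup m)).filter
            (fun x => (Finset.image x.1 Finset.univ ∪ Finset.image x.2 Finset.univ).card = k),
          ∏ d, |R (x.1 d) (x.2 d)|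
          ≤ ∑ x ∈ (Finset.univ : Finset (Tup m)).filter
              (fun x => (Finset.image x.1 Finset.univ ∪ Finset.image x.2 Finset.univ).card = k),
            ∑ D ∈ (univ : Finset (Finset (Fin 4))).filter (fun D => D.card = k - 4),
              (if Good x D ∧ (Pset x).card = k then ∏ d ∈ D, ent R (x.1 d) (x.2 d) else 0) :=
            Finset.sum_le_sum hx
        _ = ∑ D ∈ (univ : Finset (Finset (Fin 4))).filter (fun D => D.card = k - 4),
            ∑ x ∈ (Finset.univ : Finset (Tup m)).filter
              (fun x => (Finset.image x.1 Finset.univ ∪ Finset.image x.2 Finset.univ).card = k),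
              (if Good x D ∧ (Pset x).card = k then ∏ d ∈ D, ent R (x.1 d) (x.2 d) else 0) :=
            Finset.sum_comm
        _ ≤ _ := by
            refine Finset.sum_le_sum ?_
            intro D _
            rw [← Finset.sum_filter]
            refine Finset.sum_le_sum_of_subset_of_nonneg
              (Finset.filter_subset_filter _ (Finset.filter_subset _ _)) ?_
            intro x _ _
            exact Finset.prod_nonneg fun d _ => ent_nonneg R _ _
    refine stepA.trans ?_
    refine (Finset.sum_le_sum h𝒟).trans ?_
    rw [Finset.sum_const, nsmul_eq_mul]
    set S := ∑ z : Fin m × Fin m, ent R z.1 z.2 with hSdef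
    have hcard𝒟 : (((univ : Finset (Finset (Fin 4))).filter (fun D => D.card = k - 4)).card : ℝ)
        ≤ 16 := by
      have h1 := Finset.card_filter_le (univ : Finset (Finset (Fin 4)))
        (fun D => D.card = k - 4)
      have h2 : (univ : Finset (Finset (Fin 4))).card = 16 := by
        rw [card_univ, Fintype.card_finset]
        simp
      exact_mod_cast (by omega : ((univ : Finset (Finset (Fin 4))).filter
        (fun D => D.card = k - 4)).card ≤ 16)
    have hk8 : (k : ℝ) ^ 8 ≤ (8 : ℝ) ^ 8 :=
      pow_le_pow_left₀ (by positivity) (by exact_mod_cast h8) 8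
    have hfn := frob_nonneg R
    have hmn : (0 : ℝ) ≤ (m : ℝ) := Nat.cast_nonneg m
    have hSpow : S ^ (k - 4) ≤ ((m : ℝ) * frobDistId R) ^ (k - 4) :=
      pow_le_pow_left₀ hSnn (sum_ent_le R) _
    have hmm : (m : ℝ) ^ (8 - k) * ((m : ℝ) ^ (k - 4)) = (m : ℝ) ^ 4 := by
      rw [← pow_add]
      congr 1
      omega
    have key : (k : ℝ) ^ 8 * (m : ℝ) ^ (8 - k) * S ^ (k - 4)
        ≤ 8 ^ 8 * (m : ℝ) ^ 4 * frobDistId R ^ (k - 4) := by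
      have h2 : S ^ (k - 4) ≤ (m : ℝ) ^ (k - 4) * frobDistId R ^ (k - 4) := by
        rw [← mul_pow]
        exact hSpow
      calc (k : ℝ) ^ 8 * (m : ℝ) ^ (8 - k) * S ^ (k - 4)
          ≤ (8 : ℝ) ^ 8 * (m : ℝ) ^ (8 - k) * ((m : ℝ) ^ (k - 4) * frobDistId R ^ (k - 4)) := by
            refine mul_le_mul (mul_le_mul hk8 le_rfl (pow_nonneg hmn _) (by positivity)) h2
              (pow_nonneg hSnn _) ?_
            positivity
        _ = 8 ^ 8 * (m : ℝ) ^ 4 * frobDistId R ^ (k - 4) := by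
            rw [← hmm]
            ring
    have hKnn : (0 : ℝ) ≤ (k : ℝ) ^ 8 * (m : ℝ) ^ (8 - k) * S ^ (k - 4) := by positivity
    calc (((univ : Finset (Finset (Fin 4))).filter (fun D => D.card = k - 4)).card : ℝ)
          * ((k : ℝ) ^ 8 * (m : ℝ) ^ (8 - k) * S ^ (k - 4))
        ≤ 16 * (8 ^ 8 * (m : ℝ) ^ 4 * frobDistId R ^ (k - 4)) := by
          refine mul_le_mul hcard𝒟 key hKnn (by norm_num)
      _ = 16 * 8 ^ 8 * (m : ℝ) ^ 4 * frobDistId R ^ (k - 4) := by ring
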